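/- Let 1 < M ≤ d+1 and let φ: ℝ → ℝ be increasing and convex, ψ: ℝ → ℝ be increasing with x ↦ ψ(α·φ(x)) convex for every α > 0. Consider the symmetric loss L_sym(U,V) = ½(L_b(U,V) + L_b(V,U)) where L_b(U,V) = (1/M) Σ_{i=1}^M ψ( Σ_{j≠i} [ φ((v_j − v_i)·u_i) + φ((u_j − v_i)·u_i) ] ), minimized over all tuples U = (u_1,…,u_M), V = (v_1,…,v_M) of unit vectors in ℝ^d. Then every configuration with u_i = v_i for all i and ⟨u_i, u_j⟩ = −1/(M−1) for all i ≠ j attains the minimum of L_sym; if φ and ψ are strictly increasing and φ is strictly convex these are the only minimizers. -/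

import Mathlib

open scoped BigOperators RealInnerProductSpace

noncomputable section

/-- Generic mini-batch contrastive loss `L_b(U,V;φ,ψ)` (SimCLR/DCL family), where both
views contribute negatives. -/
def Lb (d M : ℕ) (φ ψ : ℝ → ℝ)
    (U V : Fin M → EuclideanSpace ℝ (Fin d)) : ℝ :=
  (1 / (M : ℝ)) *
    ∑ i, ψ (∑ j ∈ Finset.univ.erase i,
      (φ ⟪V j - V i, U i⟫ + φ ⟪U j - V i, U i⟫))

/-- Symmetrised loss `L_sym(U,V) = ½(L_b(U,V) + L_b(V,U))`. -/
def LbSym (d M : ℕ) (φ ψ : ℝ → ℝ)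
    (U V : Fin M → EuclideanSpace ℝ (Fin d)) : ℝ :=
  (Lb d M φ ψ U V + Lb d M φ ψ V U) / 2

namespace SimplexAux

open Finset Module

/-- The inner `ψ`-argument of `Lb`. -/
def Sf (d M : ℕ) (φ : ℝ → ℝ) (A B : Fin M → EuclideanSpace ℝ (Fin d)) (i : Fin M) : ℝ :=
  ∑ j ∈ Finset.univ.erase i, (φ ⟪B j - B i, A i⟫ + φ ⟪A j - B i, A i⟫)

/-- The mean of the inner-product arguments appearing in `Sf`. -/
def mf (d M : ℕ) (A B : Fin M → EuclideanSpace ℝ (Fin d)) (i : Fin M) : ℝ :=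
  (2 * ((M : ℝ) - 1))⁻¹ *
    ∑ j ∈ Finset.univ.erase i, (⟪B j - B i, A i⟫ + ⟪A j - B i, A i⟫)

lemma Lb_eq (d M : ℕ) (φ ψ : ℝ → ℝ) (A B : Fin M → EuclideanSpace ℝ (Fin d)) :
    Lb d M φ ψ A B = ((M : ℝ))⁻¹ * ∑ i, ψ (Sf d M φ A B i) := by
  rw [Lb, one_div]; rfl

lemma tfacts {M : ℕ} (hM : 1 < M) (i : Fin M) :
    ((((univ.erase i) ×ˢ (univ : Finset Bool)).card : ℝ)) = 2 * ((M : ℝ) - 1) := by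
  rw [card_product, card_erase_of_mem (mem_univ i), card_univ, Fintype.card_fin,
    card_univ, Fintype.card_bool, Nat.cast_mul, Nat.cast_sub hM.le]
  push_cast
  ring

lemma sum_p {d M : ℕ} (A B : Fin M → EuclideanSpace ℝ (Fin d)) (i : Fin M) :
    ∑ jb ∈ (univ.erase i) ×ˢ (univ : Finset Bool),
      (if jb.2 then ⟪B jb.1 - B i, A i⟫ else ⟪A jb.1 - B i, A i⟫)
      = ∑ j ∈ univ.erase i, (⟪B j - B i, A i⟫ + ⟪A j - B i, A i⟫) := by
  rw [Finset.sum_product]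
  exact Finset.sum_congr rfl fun j _ => by rw [Fintype.sum_bool]; simp

lemma sum_pφ {d M : ℕ} (φ : ℝ → ℝ) (A B : Fin M → EuclideanSpace ℝ (Fin d)) (i : Fin M) :
    ∑ jb ∈ (univ.erase i) ×ˢ (univ : Finset Bool),
      φ (if jb.2 then ⟪B jb.1 - B i, A i⟫ else ⟪A jb.1 - B i, A i⟫)
      = Sf d M φ A B i := by
  rw [Finset.sum_product, Sf]
  exact Finset.sum_congr rfl fun j _ => by rw [Fintype.sum_bool]; simp

lemma weights_one {M : ℕ} (hM : 1 < M) (i : Fin M) :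
    ∑ _jb ∈ (univ.erase i) ×ˢ (univ : Finset Bool), (2 * ((M : ℝ) - 1))⁻¹ = 1 := by
  have hα : (0:ℝ) < 2 * ((M : ℝ) - 1) := by
    have : (1:ℝ) < (M:ℝ) := by exact_mod_cast hM
    linarith
  rw [Finset.sum_const, nsmul_eq_mul, tfacts hM i, mul_inv_cancel₀ hα.ne']

lemma jensen1 {d M : ℕ} (hM : 1 < M) (φ : ℝ → ℝ) (hφconv : ConvexOn ℝ Set.univ φ)
    (A B : Fin M → EuclideanSpace ℝ (Fin d)) (i : Fin M) :
    2 * ((M : ℝ) - 1) * φ (mf d M A B i) ≤ Sf d M φ A B i := by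
  have hα : (0:ℝ) < 2 * ((M : ℝ) - 1) := by
    have : (1:ℝ) < (M:ℝ) := by exact_mod_cast hM
    linarith
  set t := (univ.erase i) ×ˢ (univ : Finset Bool) with ht
  set p : Fin M × Bool → ℝ :=
    fun jb => if jb.2 then ⟪B jb.1 - B i, A i⟫ else ⟪A jb.1 - B i, A i⟫ with hp
  have hj := hφconv.map_sum_le (t := t) (w := fun _ => (2 * ((M : ℝ) - 1))⁻¹) (p := p)
    (fun _ _ => by positivity) (weights_one hM i) (fun _ _ => Set.mem_univ _)
  simp only [smul_eq_mul] at hj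
  have hm : ∑ jb ∈ t, (2 * ((M : ℝ) - 1))⁻¹ * p jb = mf d M A B i := by
    rw [← Finset.mul_sum, mf, sum_p]
  have hφs : ∑ jb ∈ t, (2 * ((M : ℝ) - 1))⁻¹ * φ (p jb)
      = (2 * ((M : ℝ) - 1))⁻¹ * Sf d M φ A B i := by
    rw [← Finset.mul_sum, sum_pφ]
  rw [hm, hφs] at hj
  have h2 := mul_le_mul_of_nonneg_left hj hα.le
  rwa [mul_inv_cancel_left₀ hα.ne'] at h2

lemma jensen1_eq {d M : ℕ} (hM : 1 < M) (φ : ℝ → ℝ) (hφsc : StrictConvexOn ℝ Set.univ φ)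
    (A B : Fin M → EuclideanSpace ℝ (Fin d)) (i : Fin M)
    (heq : 2 * ((M : ℝ) - 1) * φ (mf d M A B i) = Sf d M φ A B i) :
    ∀ j ∈ univ.erase i, ∀ k ∈ univ.erase i, ⟪A j - B i, A i⟫ = ⟪A k - B i, A i⟫ := by
  have hα : (0:ℝ) < 2 * ((M : ℝ) - 1) := by
    have : (1:ℝ) < (M:ℝ) := by exact_mod_cast hM
    linarith
  set t := (univ.erase i) ×ˢ (univ : Finset Bool) with ht
  set p : Fin M × Bool → ℝ :=
    fun jb => if jb.2 then ⟪B jb.1 - B i, A i⟫ else ⟪A jb.1 - B i, A i⟫ with hp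
  have hle : ∑ jb ∈ t, (2 * ((M : ℝ) - 1))⁻¹ • φ (p jb)
      ≤ φ (∑ jb ∈ t, (2 * ((M : ℝ) - 1))⁻¹ • p jb) := by
    have h1 : ∑ jb ∈ t, (2 * ((M : ℝ) - 1))⁻¹ • φ (p jb)
        = (2 * ((M : ℝ) - 1))⁻¹ * Sf d M φ A B i := by
      simp only [smul_eq_mul]
      rw [← Finset.mul_sum, sum_pφ]
    have h2 : ∑ jb ∈ t, (2 * ((M : ℝ) - 1))⁻¹ • p jb = mf d M A B i := by
      simp only [smul_eq_mul]
      rw [← Finset.mul_sum, mf, sum_p]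
    rw [h1, h2, ← heq, ← mul_assoc, inv_mul_cancel₀ hα.ne', one_mul]
  have hall := hφsc.eq_of_le_map_sum (fun _ _ => by positivity)
    (weights_one hM i) (fun _ _ => Set.mem_univ _) hle
  intro j hj k hk
  have := hall (j := (j, false)) (Finset.mem_product.2 ⟨hj, Finset.mem_univ _⟩)
    (k := (k, false)) (Finset.mem_product.2 ⟨hk, Finset.mem_univ _⟩)
  simpa [hp] using this

lemma sum_mf_one {d M : ℕ} (hM : 1 < M) (A B : Fin M → EuclideanSpace ℝ (Fin d))
    (hA : ∀ i, ‖A i‖ = 1) :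
    ∑ i, mf d M A B i = (2 * ((M : ℝ) - 1))⁻¹ *
      (⟪(∑ j, B j) + (∑ j, A j), ∑ j, A j⟫
        - (2 * (M : ℝ) - 1) * (∑ i, ⟪B i, A i⟫) - (M : ℝ)) := by
  have h1 : ∀ i : Fin M, (∑ j ∈ univ.erase i, (⟪B j - B i, A i⟫ + ⟪A j - B i, A i⟫))
      = ⟪(∑ j, B j) + (∑ j, A j), A i⟫ - ⟪B i, A i⟫ - ⟪A i, A i⟫
        - 2 * ((M : ℝ) - 1) * ⟪B i, A i⟫ := by
    intro i
    have e1 : ∑ j ∈ univ.erase i, ⟪B j, A i⟫ = ⟪∑ j, B j, A i⟫ - ⟪B i, A i⟫ := by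
      rw [sum_inner]
      exact Finset.sum_erase_eq_sub (Finset.mem_univ i)
    have e2 : ∑ j ∈ univ.erase i, ⟪A j, A i⟫ = ⟪∑ j, A j, A i⟫ - ⟪A i, A i⟫ := by
      rw [sum_inner]
      exact Finset.sum_erase_eq_sub (Finset.mem_univ i)
    have e3 : ((univ.erase i).card : ℝ) = (M : ℝ) - 1 := by
      rw [card_erase_of_mem (mem_univ i), card_univ, Fintype.card_fin,
        Nat.cast_sub hM.le, Nat.cast_one]
    calc ∑ j ∈ univ.erase i, (⟪B j - B i, A i⟫ + ⟪A j - B i, A i⟫)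
        = ∑ j ∈ univ.erase i, (⟪B j, A i⟫ + ⟪A j, A i⟫ - 2 * ⟪B i, A i⟫) := by
          refine sum_congr rfl fun j _ => ?_
          rw [inner_sub_left, inner_sub_left]; ring
      _ = (∑ j ∈ univ.erase i, ⟪B j, A i⟫) + (∑ j ∈ univ.erase i, ⟪A j, A i⟫)
          - ((univ.erase i).card : ℝ) * (2 * ⟪B i, A i⟫) := by
          rw [Finset.sum_sub_distrib, Finset.sum_add_distrib, Finset.sum_const,
            nsmul_eq_mul]
      _ = _ := by rw [e1, e2, e3, inner_add_left]; ring
  have hAA : ∑ i, ⟪A i, A i⟫ = (M : ℝ) := by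
    have : ∀ i : Fin M, ⟪A i, A i⟫ = (1:ℝ) := fun i => by
      rw [real_inner_self_eq_norm_sq, hA i]; norm_num
    simp [this, hA]
  simp only [mf]
  rw [← Finset.mul_sum]
  congr 1
  calc ∑ i, (∑ j ∈ univ.erase i, (⟪B j - B i, A i⟫ + ⟪A j - B i, A i⟫))
      = ∑ i, (⟪(∑ j, B j) + (∑ j, A j), A i⟫ - ⟪B i, A i⟫ - ⟪A i, A i⟫
          - 2 * ((M : ℝ) - 1) * ⟪B i, A i⟫) := Finset.sum_congr rfl fun i _ => h1 i
    _ = ⟪(∑ j, B j) + (∑ j, A j), ∑ i, A i⟫ - (∑ i, ⟪B i, A i⟫) - (∑ i, ⟪A i, A i⟫)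
          - 2 * ((M : ℝ) - 1) * (∑ i, ⟪B i, A i⟫) := by
        rw [Finset.sum_sub_distrib, Finset.sum_sub_distrib, Finset.sum_sub_distrib,
          ← inner_sum, ← Finset.mul_sum]
    _ = _ := by rw [hAA]; ring

lemma sum_mf {d M : ℕ} (hM : 1 < M) (U V : Fin M → EuclideanSpace ℝ (Fin d))
    (hU : ∀ i, ‖U i‖ = 1) (hV : ∀ i, ‖V i‖ = 1) :
    (∑ i, mf d M U V i) + (∑ i, mf d M V U i)
      = (2 * ((M : ℝ) - 1))⁻¹ * (‖∑ i, (U i + V i)‖^2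
          - 2 * (2 * (M : ℝ) - 1) * (∑ i, ⟪U i, V i⟫) - 2 * (M : ℝ)) := by
  rw [sum_mf_one hM U V hU, sum_mf_one hM V U hV, ← mul_add]
  congr 1
  have hs : ∑ i, (U i + V i) = (∑ j, U j) + (∑ j, V j) := Finset.sum_add_distrib
  have hinner : ⟪(∑ j, V j) + (∑ j, U j), ∑ j, U j⟫ + ⟪(∑ j, U j) + (∑ j, V j), ∑ j, V j⟫
      = ‖∑ i, (U i + V i)‖^2 := by
    rw [hs, ← real_inner_self_eq_norm_sq, inner_add_right, add_comm (∑ j, V j)]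
  have hcomm : ∑ i, ⟪V i, U i⟫ = ∑ i, ⟪U i, V i⟫ :=
    Finset.sum_congr rfl fun i _ => real_inner_comm _ _
  rw [← hinner, hcomm]
  ring

set_option maxHeartbeats 800000 in
lemma simplex_exists (d M : ℕ) (hM : 1 < M) (hMd : M ≤ d + 1) :
    ∃ W : Fin M → EuclideanSpace ℝ (Fin d), (∀ i, ‖W i‖ = 1) ∧
      ∀ i j, i ≠ j → ⟪W i, W j⟫ = -1 / ((M : ℝ) - 1) := by
  classical
  have hM1 : (1:ℝ) < (M:ℝ) := by exact_mod_cast hM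
  have hMne : (M:ℝ) ≠ 0 := by positivity
  have hne1 : ((M:ℝ) - 1) ≠ 0 := by linarith
  -- the centred simplex in `ℝ^M`
  set e : Fin M → EuclideanSpace ℝ (Fin M) := fun i => EuclideanSpace.single i (1:ℝ) with he
  set o : EuclideanSpace ℝ (Fin M) := ∑ j, e j with ho
  set w : Fin M → EuclideanSpace ℝ (Fin M) := fun i => e i - (M:ℝ)⁻¹ • o with hw
  have hee : ∀ i j : Fin M, ⟪e i, e j⟫ = if i = j then (1:ℝ) else 0 := by
    intro i j
    simp [he, EuclideanSpace.inner_single_left, EuclideanSpace.single_apply, eq_comm]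
  have heo : ∀ i, ⟪e i, o⟫ = 1 := by
    intro i
    rw [ho, inner_sum]
    simp [hee]
  have hoe : ∀ i, ⟪o, e i⟫ = 1 := fun i => by rw [real_inner_comm]; exact heo i
  have hoo : ⟪o, o⟫ = (M:ℝ) := by
    rw [ho, sum_inner]
    simp only [← ho, heo]
    simp
  have hww : ∀ i j, ⟪w i, w j⟫ = (if i = j then (1:ℝ) else 0) - (M:ℝ)⁻¹ := by
    intro i j
    simp only [hw, inner_sub_left, inner_sub_right, real_inner_smul_left,
      real_inner_smul_right, hee, heo, hoe, hoo]
    field_simp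
    ring
  have honz : o ≠ 0 := by
    intro h
    rw [h, inner_zero_left] at hoo
    exact hMne hoo.symm
  set K : Submodule ℝ (EuclideanSpace ℝ (Fin M)) := (ℝ ∙ o)ᗮ with hK
  have hwK : ∀ i, w i ∈ K := by
    intro i
    rw [hK, Submodule.mem_orthogonal_singleton_iff_inner_right]
    simp only [hw, inner_sub_right, real_inner_smul_right, hoe, hoo]
    field_simp
    ring
  have hrk : finrank ℝ K ≤ d := by
    have h1 : finrank ℝ (ℝ ∙ o) = 1 := finrank_span_singleton honz
    have h2 := Submodule.finrank_add_finrank_orthogonal (K := (ℝ ∙ o))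
    rw [h1, finrank_euclideanSpace_fin, ← hK] at h2
    omega
  set B := stdOrthonormalBasis ℝ K with hB
  set Bd := EuclideanSpace.basisFun (Fin d) ℝ with hBd
  set f : Fin (finrank ℝ K) → Fin d := Fin.castLE hrk with hf
  have hOF : Orthonormal ℝ (fun k => Bd (f k)) :=
    Bd.orthonormal.comp f (Fin.castLE_injective hrk)
  set T : K → EuclideanSpace ℝ (Fin d) := fun x => ∑ k, B.repr x k • Bd (f k) with hT
  have hTinner : ∀ x y : K, ⟪T x, T y⟫ = ⟪(x : EuclideanSpace ℝ (Fin M)), y⟫ := by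
    intro x y
    rw [hT]
    have h1 := hOF.inner_sum (fun k => B.repr x k) (fun k => B.repr y k) univ
    simp only [starRingEnd_apply, star_trivial] at h1
    rw [h1]
    have h2 := B.repr.inner_map_map x y
    have h3 : (inner ℝ x y : ℝ)
        = ⟪(x : EuclideanSpace ℝ (Fin M)), (y : EuclideanSpace ℝ (Fin M))⟫ := rfl
    rw [← h3, ← h2, PiLp.inner_apply]
    simp [starRingEnd_apply, star_trivial, mul_comm]
  set c : ℝ := Real.sqrt ((M:ℝ) / ((M:ℝ) - 1)) with hc
  have hc2 : c^2 = (M:ℝ) / ((M:ℝ) - 1) :=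
    Real.sq_sqrt (div_nonneg (by positivity) (by linarith))
  set W : Fin M → EuclideanSpace ℝ (Fin d) :=
    fun i => T ⟨c • w i, K.smul_mem c (hwK i)⟩ with hW
  have hWinner : ∀ i j, ⟪W i, W j⟫ = c^2 * ((if i = j then (1:ℝ) else 0) - (M:ℝ)⁻¹) := by
    intro i j
    rw [hW]
    rw [hTinner]
    have : ⟪((⟨c • w i, K.smul_mem c (hwK i)⟩ : K) : EuclideanSpace ℝ (Fin M)),
        ((⟨c • w j, K.smul_mem c (hwK j)⟩ : K) : EuclideanSpace ℝ (Fin M))⟫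
        = ⟪c • w i, c • w j⟫ := rfl
    rw [this, real_inner_smul_left, real_inner_smul_right, hww]
    ring
  refine ⟨W, ?_, ?_⟩
  · intro i
    have h1 : ‖W i‖^2 = 1 := by
      rw [← real_inner_self_eq_norm_sq, hWinner i i, if_pos rfl, hc2]
      field_simp
    calc ‖W i‖ = Real.sqrt (‖W i‖^2) := (Real.sqrt_sq (norm_nonneg _)).symm
      _ = 1 := by rw [h1, Real.sqrt_one]
  · intro i j hij
    rw [hWinner i j, if_neg hij, hc2]
    field_simp
    ring

lemma simplex_value (d M : ℕ) (hM : 1 < M) (φ ψ : ℝ → ℝ)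
    (U V : Fin M → EuclideanSpace ℝ (Fin d)) (hU : ∀ i, ‖U i‖ = 1)
    (hUV : ∀ i, U i = V i)
    (hsim : ∀ i j, i ≠ j → ⟪U i, U j⟫ = -1 / ((M : ℝ) - 1)) :
    LbSym d M φ ψ U V = ψ (2 * ((M : ℝ) - 1) * φ (-1 / ((M : ℝ) - 1) - 1)) := by
  have hUVe : U = V := funext hUV
  subst hUVe
  have hMne : (M : ℝ) ≠ 0 := by positivity
  have hLb : Lb d M φ ψ U U = ψ (2 * ((M : ℝ) - 1) * φ (-1 / ((M : ℝ) - 1) - 1)) := by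
    rw [Lb]
    have hinner : ∀ i : Fin M, (∑ j ∈ Finset.univ.erase i,
        (φ ⟪U j - U i, U i⟫ + φ ⟪U j - U i, U i⟫))
        = 2 * ((M : ℝ) - 1) * φ (-1 / ((M : ℝ) - 1) - 1) := by
      intro i
      have hterm : ∀ j ∈ Finset.univ.erase i,
          φ ⟪U j - U i, U i⟫ + φ ⟪U j - U i, U i⟫
            = 2 * φ (-1 / ((M : ℝ) - 1) - 1) := by
        intro j hj
        have hji : j ≠ i := (Finset.mem_erase.1 hj).1
        have hval : ⟪U j - U i, U i⟫ = -1 / ((M : ℝ) - 1) - 1 := by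
          rw [inner_sub_left, real_inner_self_eq_norm_sq, hU i,
            real_inner_comm, hsim i j (Ne.symm hji)]
          norm_num
        rw [hval]; ring
      rw [Finset.sum_congr rfl hterm, Finset.sum_const,
        Finset.card_erase_of_mem (Finset.mem_univ i), Finset.card_univ,
        Fintype.card_fin, nsmul_eq_mul, Nat.cast_sub hM.le, Nat.cast_one]
      ring
    simp only [hinner, Finset.sum_const, Finset.card_univ, Fintype.card_fin, nsmul_eq_mul]
    field_simp
  rw [LbSym, hLb, add_self_div_two]

set_option maxHeartbeats 1600000 in
lemma key (d M : ℕ) (hM : 1 < M) (φ ψ : ℝ → ℝ)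
    (hφmono : Monotone φ) (hφconv : ConvexOn ℝ Set.univ φ)
    (hψmono : Monotone ψ)
    (hψφconv : ∀ α : ℝ, 0 < α → ConvexOn ℝ Set.univ (fun x => ψ (α * φ x)))
    (U V : Fin M → EuclideanSpace ℝ (Fin d))
    (hU : ∀ i, ‖U i‖ = 1) (hV : ∀ i, ‖V i‖ = 1) :
    ψ (2 * ((M : ℝ) - 1) * φ (-1 / ((M : ℝ) - 1) - 1)) ≤ LbSym d M φ ψ U V ∧
    (StrictMono φ → StrictMono ψ → StrictConvexOn ℝ Set.univ φ →
      LbSym d M φ ψ U V = ψ (2 * ((M : ℝ) - 1) * φ (-1 / ((M : ℝ) - 1) - 1)) →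
      (∀ i, U i = V i) ∧ ∀ i j, i ≠ j → ⟪U i, U j⟫ = -1 / ((M : ℝ) - 1)) := by
  have hM1 : (1:ℝ) < (M:ℝ) := by exact_mod_cast hM
  have hα : (0:ℝ) < 2 * ((M:ℝ) - 1) := by linarith
  have hMpos : (0:ℝ) < (M:ℝ) := by linarith
  have hgconv : ConvexOn ℝ Set.univ (fun t => ψ (2 * ((M:ℝ) - 1) * φ t)) := hψφconv _ hα
  have hwM : ∑ _i : Fin M, ((M:ℝ))⁻¹ = 1 := by
    rw [Finset.sum_const, Finset.card_univ, Fintype.card_fin, nsmul_eq_mul,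
      mul_inv_cancel₀ hMpos.ne']
  -- termwise bounds
  have hT1 : (M:ℝ)⁻¹ * ∑ i, ψ (2 * ((M:ℝ) - 1) * φ (mf d M U V i))
      ≤ (M:ℝ)⁻¹ * ∑ i, ψ (Sf d M φ U V i) :=
    mul_le_mul_of_nonneg_left
      (Finset.sum_le_sum fun i _ => hψmono (jensen1 hM φ hφconv U V i)) (by positivity)
  have hT2 : (M:ℝ)⁻¹ * ∑ i, ψ (2 * ((M:ℝ) - 1) * φ (mf d M V U i))
      ≤ (M:ℝ)⁻¹ * ∑ i, ψ (Sf d M φ V U i) :=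
    mul_le_mul_of_nonneg_left
      (Finset.sum_le_sum fun i _ => hψmono (jensen1 hM φ hφconv V U i)) (by positivity)
  -- Jensen over the batch index
  have hJ : ∀ A B : Fin M → EuclideanSpace ℝ (Fin d),
      ψ (2 * ((M:ℝ) - 1) * φ ((M:ℝ)⁻¹ * ∑ i, mf d M A B i))
        ≤ (M:ℝ)⁻¹ * ∑ i, ψ (2 * ((M:ℝ) - 1) * φ (mf d M A B i)) := by
    intro A B
    have h1 := hgconv.map_sum_le (t := (univ : Finset (Fin M)))
      (w := fun _ => (M:ℝ)⁻¹) (p := fun i => mf d M A B i)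
      (fun _ _ => by positivity) hwM (fun _ _ => Set.mem_univ _)
    simp only [smul_eq_mul] at h1
    rwa [← Finset.mul_sum, ← Finset.mul_sum] at h1
  have hJ1 := hJ U V
  have hJ2 := hJ V U
  -- two-point convexity
  have h2pt : ψ (2 * ((M:ℝ) - 1) * φ
        (((M:ℝ)⁻¹ * ∑ i, mf d M U V i + (M:ℝ)⁻¹ * ∑ i, mf d M V U i) / 2))
      ≤ (ψ (2 * ((M:ℝ) - 1) * φ ((M:ℝ)⁻¹ * ∑ i, mf d M U V i))
        + ψ (2 * ((M:ℝ) - 1) * φ ((M:ℝ)⁻¹ * ∑ i, mf d M V U i))) / 2 := by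
    have h := hgconv.2 (Set.mem_univ ((M:ℝ)⁻¹ * ∑ i, mf d M U V i))
      (Set.mem_univ ((M:ℝ)⁻¹ * ∑ i, mf d M V U i))
      (by norm_num : (0:ℝ) ≤ 1/2) (by norm_num : (0:ℝ) ≤ 1/2) (by norm_num : (1:ℝ)/2 + 1/2 = 1)
    simp only [smul_eq_mul] at h
    calc ψ (2 * ((M:ℝ) - 1) * φ
          (((M:ℝ)⁻¹ * ∑ i, mf d M U V i + (M:ℝ)⁻¹ * ∑ i, mf d M V U i) / 2))
        = ψ (2 * ((M:ℝ) - 1) * φ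
          (1/2 * ((M:ℝ)⁻¹ * ∑ i, mf d M U V i) + 1/2 * ((M:ℝ)⁻¹ * ∑ i, mf d M V U i))) := by
          ring_nf
      _ ≤ 1/2 * ψ (2 * ((M:ℝ) - 1) * φ ((M:ℝ)⁻¹ * ∑ i, mf d M U V i))
          + 1/2 * ψ (2 * ((M:ℝ) - 1) * φ ((M:ℝ)⁻¹ * ∑ i, mf d M V U i)) := h
      _ = _ := by ring
  -- the mean bound
  have hP : ∀ i : Fin M, ⟪U i, V i⟫ ≤ 1 := fun i => by
    have h := real_inner_le_norm (U i) (V i)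
    rwa [hU i, hV i, mul_one] at h
  have hPsum : ∑ i, ⟪U i, V i⟫ ≤ (M:ℝ) := by
    calc ∑ i, ⟪U i, V i⟫ ≤ ∑ _i : Fin M, (1:ℝ) := Finset.sum_le_sum fun i _ => hP i
      _ = (M:ℝ) := by simp
  have hs0 : (0:ℝ) ≤ ‖∑ i, (U i + V i)‖^2 := sq_nonneg _
  have hform : ((M:ℝ)⁻¹ * ∑ i, mf d M U V i + (M:ℝ)⁻¹ * ∑ i, mf d M V U i) / 2
        - (-1 / ((M:ℝ) - 1) - 1)
      = (‖∑ i, (U i + V i)‖^2 - 2 * (2 * (M:ℝ) - 1) * (∑ i, ⟪U i, V i⟫)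
          - 2 * (M:ℝ) + 4 * (M:ℝ)^2) / (4 * (M:ℝ) * ((M:ℝ) - 1)) := by
    rw [← mul_add, sum_mf hM U V hU hV]
    have hne : ((M:ℝ) - 1) ≠ 0 := by linarith
    field_simp
    ring
  have hden : (0:ℝ) < 4 * (M:ℝ) * ((M:ℝ) - 1) := by nlinarith
  have hprod : (0:ℝ) ≤ 2 * (2 * (M:ℝ) - 1) * ((M:ℝ) - ∑ i, ⟪U i, V i⟫) :=
    mul_nonneg (by linarith) (by linarith)
  have hmean : (-1 / ((M:ℝ) - 1) - 1)
      ≤ ((M:ℝ)⁻¹ * ∑ i, mf d M U V i + (M:ℝ)⁻¹ * ∑ i, mf d M V U i) / 2 := by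
    rw [← sub_nonneg, hform]
    apply div_nonneg _ hden.le
    nlinarith [hs0, hprod]
  have hLbSym : LbSym d M φ ψ U V
      = ((M:ℝ)⁻¹ * ∑ i, ψ (Sf d M φ U V i) + (M:ℝ)⁻¹ * ∑ i, ψ (Sf d M φ V U i)) / 2 := by
    rw [LbSym, Lb_eq, Lb_eq]
  -- abbreviate the large scalar quantities so that linear arithmetic is fast
  set s1 := ∑ i, mf d M U V i with hs1def
  set s2 := ∑ i, mf d M V U i with hs2def
  set SN := ‖∑ i, (U i + V i)‖^2 with hSNdef
  set P := ∑ i, ⟪U i, V i⟫ with hPdef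
  set Sp1 := ∑ i, ψ (Sf d M φ U V i) with hSp1def
  set Sp2 := ∑ i, ψ (Sf d M φ V U i) with hSp2def
  set Sg1 := ∑ i, ψ (2 * ((M:ℝ) - 1) * φ (mf d M U V i)) with hSg1def
  set Sg2 := ∑ i, ψ (2 * ((M:ℝ) - 1) * φ (mf d M V U i)) with hSg2def
  have hmono2 : ψ (2 * ((M:ℝ) - 1) * φ (-1 / ((M:ℝ) - 1) - 1))
      ≤ ψ (2 * ((M:ℝ) - 1) * φ (((M:ℝ)⁻¹ * s1 + (M:ℝ)⁻¹ * s2) / 2)) :=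
    hψmono (mul_le_mul_of_nonneg_left (hφmono hmean) hα.le)
  have hbound : ψ (2 * ((M : ℝ) - 1) * φ (-1 / ((M : ℝ) - 1) - 1)) ≤ LbSym d M φ ψ U V := by
    rw [hLbSym]; linarith [hmono2, h2pt, hJ1, hJ2, hT1, hT2]
  refine ⟨hbound, ?_⟩
  intro hφs hψs hφsc heq
  rw [hLbSym] at heq
  -- equality of the mean with c₀
  have hmeq : ((M:ℝ)⁻¹ * s1 + (M:ℝ)⁻¹ * s2) / 2
      = (-1 / ((M:ℝ) - 1) - 1) := by
    by_contra hne
    have hlt : (-1 / ((M:ℝ) - 1) - 1)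
        < ((M:ℝ)⁻¹ * s1 + (M:ℝ)⁻¹ * s2) / 2 :=
      hmean.lt_of_ne (Ne.symm hne)
    have := hψs ((mul_lt_mul_iff_right₀ hα).2 (hφs hlt))
    linarith [h2pt, hJ1, hJ2, hT1, hT2]
  have h0 : (SN - 2 * (2 * (M:ℝ) - 1) * P
      - 2 * (M:ℝ) + 4 * (M:ℝ)^2) / (4 * (M:ℝ) * ((M:ℝ) - 1)) = 0 := by
    rw [← hform, hmeq]; ring
  have hnum : SN - 2 * (2 * (M:ℝ) - 1) * P
      - 2 * (M:ℝ) + 4 * (M:ℝ)^2 = 0 :=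
    (div_eq_zero_iff.1 h0).resolve_right hden.ne'
  have hSN : SN = 0 := by nlinarith [hs0, hprod, hnum]
  have h6 : 2 * (2 * (M:ℝ) - 1) * ((M:ℝ) - P) = 0 := by
    linear_combination hnum - hSN
  have hPM : P = (M:ℝ) := by
    have h7 := (mul_eq_zero.1 h6).resolve_left (ne_of_gt (by linarith : (0:ℝ) < 2 * (2 * (M:ℝ) - 1)))
    linarith
  have hone : ∀ i ∈ (univ : Finset (Fin M)), (1:ℝ) - ⟪U i, V i⟫ = 0 := by
    refine (Finset.sum_eq_zero_iff_of_nonneg (fun i _ => by linarith [hP i])).1 ?_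
    rw [Finset.sum_sub_distrib]
    simp only [Finset.sum_const, card_univ, Fintype.card_fin, nsmul_eq_mul, mul_one]
    rw [← hPdef, hPM]; ring
  have hUVi : ∀ i, U i = V i := fun i =>
    (inner_eq_one_iff_of_norm_eq_one (𝕜 := ℝ) (hU i) (hV i)).1
      (by have := hone i (mem_univ i); linarith)
  have hsumUV : ∑ i, (U i + V i) = 0 := by
    have hn2 : ‖∑ i, (U i + V i)‖^2 = 0 := by rw [← hSNdef]; exact hSN
    exact norm_eq_zero.1 ((pow_eq_zero_iff two_ne_zero).1 hn2)
  have hsU : ∑ i, U i = 0 := by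
    have h2 : ∑ i, (U i + V i) = (2:ℝ) • ∑ i, U i := by
      rw [Finset.smul_sum]
      refine Finset.sum_congr rfl fun i _ => ?_
      rw [← hUVi i, two_smul]
    rw [h2] at hsumUV
    exact (smul_eq_zero.1 hsumUV).resolve_left (by norm_num)
  -- termwise equalities
  have hc0 : ψ (2 * ((M:ℝ) - 1) * φ (-1 / ((M:ℝ) - 1) - 1))
      = ψ (2 * ((M:ℝ) - 1) * φ (((M:ℝ)⁻¹ * s1 + (M:ℝ)⁻¹ * s2) / 2)) := by
    rw [hmeq]
  have hL1eq : (M:ℝ)⁻¹ * Sg1 = (M:ℝ)⁻¹ * Sp1 := by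
    linarith [hmono2, h2pt, hJ1, hJ2, hT1, hT2, hc0.ge, hc0.le]
  have hterm : ∀ i ∈ (univ : Finset (Fin M)),
      ψ (2 * ((M:ℝ) - 1) * φ (mf d M U V i)) = ψ (Sf d M φ U V i) := by
    have h9 : Sg1 = Sp1 := mul_left_cancel₀ (by positivity : ((M:ℝ)⁻¹) ≠ 0) hL1eq
    rw [hSg1def, hSp1def] at h9
    exact (Finset.sum_eq_sum_iff_of_le
      (fun i _ => hψmono (jensen1 hM φ hφconv U V i))).1 h9
  have hSeq : ∀ i : Fin M, 2 * ((M:ℝ) - 1) * φ (mf d M U V i) = Sf d M φ U V i :=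
    fun i => hψs.injective (hterm i (mem_univ i))
  refine ⟨hUVi, ?_⟩
  intro i j hij
  have hc := jensen1_eq hM φ hφsc U V j (hSeq j)
  have hcc : ∀ k ∈ univ.erase j, ⟪U k, U j⟫ = ⟪U i, U j⟫ := by
    intro k hk
    have h8 := hc k hk i (mem_erase.2 ⟨hij, mem_univ _⟩)
    rw [inner_sub_left, inner_sub_left] at h8
    linarith
  have hsumj : ∑ k ∈ univ.erase j, ⟪U k, U j⟫ = -1 := by
    have e1 : ∑ k ∈ univ.erase j, ⟪U k, U j⟫ = ⟪∑ k, U k, U j⟫ - ⟪U j, U j⟫ := by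
      rw [sum_inner]
      exact Finset.sum_erase_eq_sub (mem_univ j)
    rw [e1, hsU, inner_zero_left, real_inner_self_eq_norm_sq, hU j]
    norm_num
  rw [Finset.sum_congr rfl hcc, Finset.sum_const, card_erase_of_mem (mem_univ j),
    card_univ, Fintype.card_fin, nsmul_eq_mul, Nat.cast_sub hM.le, Nat.cast_one] at hsumj
  have hne : ((M:ℝ) - 1) ≠ 0 := by linarith
  rw [eq_div_iff hne]
  linarith [hsumj]

end SimplexAux

theorem stmt_1 (d M : ℕ) (hM : 1 < M) (hMd : M ≤ d + 1)
    (φ ψ : ℝ → ℝ)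
    (hφmono : Monotone φ) (hφconv : ConvexOn ℝ Set.univ φ)
    (hψmono : Monotone ψ)
    (hψφconv : ∀ α : ℝ, 0 < α → ConvexOn ℝ Set.univ (fun x => ψ (α * φ x))) :
    -- every aligned regular-simplex configuration attains the minimum
    (∀ U V : Fin M → EuclideanSpace ℝ (Fin d),
        (∀ i, ‖U i‖ = 1) → (∀ i, ‖V i‖ = 1) →
        (∀ i, U i = V i) →
        (∀ i j, i ≠ j → ⟪U i, U j⟫ = -1 / ((M : ℝ) - 1)) →
        ∀ U' V' : Fin M → EuclideanSpace ℝ (Fin d),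
          (∀ i, ‖U' i‖ = 1) → (∀ i, ‖V' i‖ = 1) →
          LbSym d M φ ψ U V ≤ LbSym d M φ ψ U' V') ∧
    -- under strictness, these are the only minimizers
    (StrictMono φ → StrictMono ψ → StrictConvexOn ℝ Set.univ φ →
      ∀ U V : Fin M → EuclideanSpace ℝ (Fin d),
        (∀ i, ‖U i‖ = 1) → (∀ i, ‖V i‖ = 1) →
        (∀ U' V' : Fin M → EuclideanSpace ℝ (Fin d),
          (∀ i, ‖U' i‖ = 1) → (∀ i, ‖V' i‖ = 1) →
          LbSym d M φ ψ U V ≤ LbSym d M φ ψ U' V') →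
        (∀ i, U i = V i) ∧
        (∀ i j, i ≠ j → ⟪U i, U j⟫ = -1 / ((M : ℝ) - 1))) := by
  constructor
  · intro U V hU hV hUV hsim U' V' hU' hV'
    rw [SimplexAux.simplex_value d M hM φ ψ U V hU hUV hsim]
    exact (SimplexAux.key d M hM φ ψ hφmono hφconv hψmono hψφconv U' V' hU' hV').1
  · intro hφs hψs hφsc U V hU hV hmin
    obtain ⟨W, hWnorm, hWsim⟩ := SimplexAux.simplex_exists d M hM hMd
    have h1 := hmin W W hWnorm hWnorm
    rw [SimplexAux.simplex_value d M hM φ ψ W W hWnorm (fun _ => rfl) hWsim] at h1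
    have h2 := SimplexAux.key d M hM φ ψ hφmono hφconv hψmono hψφconv U V hU hV
    exact h2.2 hφs hψs hφsc (le_antisymm h1 h2.1)
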